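/- arXiv:1802.07322 — 6 statements merged into one kernel-verified Lean document; each statement's English description precedes it below -/
import Mathlib

section
/- One step of structure preservation in Broyden's method: suppose Cᴴ v_k = b₂ and J_k = [[M_k, W_k],[Cᴴ, 0]] is invertible, let Δx_k = (Δv_k, Δw_k) solve J_k Δx_k = −F(x_k) where F((v,w)) = (G(v,w), Cᴴ v − b₂) for some function G, and set v_{k+1} = v_k + γ Δv_k. Then Cᴴ v_{k+1} = b₂, and the Broyden update J_{k+1} = J_k + (1/‖Δx_k‖²) z_{k+1} Δx_kᴴ with z_{k+1} = (1/γ)(F(x_{k+1}) − (1−γ) F(x_k)) again has the form [[M_{k+1}, W_{k+1}],[Cᴴ, 0]], i.e. its last p+1 rows are unchanged. -/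
open Matrix

/-- One step of structure preservation in Broyden's method: the normalization
`Cᴴ v = b₂` and the block structure of the Jacobian (i.e. its last `p+1` rows)
are preserved under the Broyden update. -/
theorem broyden_structure_preservation (n p : ℕ)
    (C : Matrix (Fin n) (Fin (p + 1)) ℂ)
    (b₂ : Matrix (Fin (p + 1)) (Fin 1) ℂ)
    (G : Matrix (Fin n) (Fin 1) ℂ → Matrix (Fin (p + 1)) (Fin 1) ℂ → Matrix (Fin n) (Fin 1) ℂ)
    (F : Matrix (Fin n ⊕ Fin (p + 1)) (Fin 1) ℂ → Matrix (Fin n ⊕ Fin (p + 1)) (Fin 1) ℂ)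
    (hF : ∀ x, F x = fromRows (G (x.submatrix Sum.inl id) (x.submatrix Sum.inr id))
      (Cᴴ * x.submatrix Sum.inl id - b₂))
    (vk : Matrix (Fin n) (Fin 1) ℂ) (wk : Matrix (Fin (p + 1)) (Fin 1) ℂ)
    (hvk : Cᴴ * vk = b₂)
    (Mk : Matrix (Fin n) (Fin n) ℂ) (Wk : Matrix (Fin n) (Fin (p + 1)) ℂ)
    (hJk : IsUnit (fromBlocks Mk Wk Cᴴ 0).det)
    (Δvk : Matrix (Fin n) (Fin 1) ℂ) (Δwk : Matrix (Fin (p + 1)) (Fin 1) ℂ)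
    (hΔ : fromRows Δvk Δwk ≠ 0)
    (hsolve : fromBlocks Mk Wk Cᴴ 0 * fromRows Δvk Δwk = -F (fromRows vk wk))
    (γ : ℂ) (hγ : γ ≠ 0)
    (xk1 : Matrix (Fin n ⊕ Fin (p + 1)) (Fin 1) ℂ)
    (hx1 : xk1 = fromRows vk wk + γ • fromRows Δvk Δwk)
    (zk1 : Matrix (Fin n ⊕ Fin (p + 1)) (Fin 1) ℂ)
    (hz : zk1 = γ⁻¹ • (F xk1 - (1 - γ) • F (fromRows vk wk)))
    (Jk1 : Matrix (Fin n ⊕ Fin (p + 1)) (Fin n ⊕ Fin (p + 1)) ℂ)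
    (hJ1 : Jk1 = fromBlocks Mk Wk Cᴴ 0 +
      (((fromRows Δvk Δwk)ᴴ * fromRows Δvk Δwk) 0 0)⁻¹ • (zk1 * (fromRows Δvk Δwk)ᴴ)) :
    Cᴴ * (vk + γ • Δvk) = b₂ ∧
      ∃ Mk1 Wk1, Jk1 = fromBlocks Mk1 Wk1 Cᴴ 0 := by

  have hsub1 : (fromRows vk wk).submatrix Sum.inl id = vk := rfl
  have hsub2 : (fromRows vk wk).submatrix Sum.inr id = wk := rfl
  -- bottom rows of the solve equation: Cᴴ Δvk = 0
  have hΔC : Cᴴ * Δvk = 0 := by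
    have h := congrArg toRows₂ hsolve
    rw [hF] at h
    simp only [fromBlocks_mul_fromRows, toRows₂_fromRows, Matrix.zero_mul, add_zero,
      hsub1, hvk, sub_self] at h
    rw [h]
    ext i j
    simp [toRows₂]
  have h1 : Cᴴ * (vk + γ • Δvk) = b₂ := by
    rw [Matrix.mul_add, Matrix.mul_smul, hΔC, hvk, smul_zero, add_zero]
  refine ⟨h1, Jk1.toBlocks₁₁, Jk1.toBlocks₁₂, ?_⟩
  -- bottom rows of F at both points are zero
  have hxk1 : xk1 = fromRows (vk + γ • Δvk) (wk + γ • Δwk) := by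
    rw [hx1]; ext (i | i) j <;> simp [fromRows_apply_inl, fromRows_apply_inr]
  have hFx1 : ∀ i j, F xk1 (Sum.inr i) j = 0 := by
    intro i j
    rw [hF, hxk1]
    have hs : (fromRows (vk + γ • Δvk) (wk + γ • Δwk)).submatrix Sum.inl id
        = vk + γ • Δvk := rfl
    simp [hs, h1]
  have hFx0 : ∀ i j, F (fromRows vk wk) (Sum.inr i) j = 0 := by
    intro i j
    rw [hF]
    simp [hsub1, hvk]
  have hzbot : ∀ i j, zk1 (Sum.inr i) j = 0 := by
    intro i j
    rw [hz]
    simp [Matrix.smul_apply, Matrix.sub_apply, hFx1 i j, hFx0 i j]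
  rw [hJ1]
  ext (i | i) (j | j)
  · simp [toBlocks₁₁, hJ1]
  · simp [toBlocks₁₂, hJ1]
  · simp [Matrix.add_apply, Matrix.smul_apply, Matrix.mul_apply, hzbot, fromBlocks]
  · simp [Matrix.add_apply, Matrix.smul_apply, Matrix.mul_apply, hzbot, fromBlocks]
end

section
/- Explicit solution of the extended NEP: suppose (X,S) satisfies the invariant pair relation for the polynomial NEP M(λ) = Σᵢ Mᵢ λⁱ, X has orthonormal columns (XᴴX = I), M(λ₁)v₁ = 0, and λ₁ ∉ spectrum(S). Then v := (I − XXᴴ)v₁, u := (λ₁ I − S) Xᴴ v₁ satisfy M(λ₁) v + U(λ₁) u = 0 and Xᴴ v = 0, where U(λ) = M(λ) X (λI − S)⁻¹. -/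
open Matrix

/-- Explicit solution of the extended (deflated) NEP. -/
theorem extended_nep_solution (n p m : ℕ)
    (M : ℕ → Matrix (Fin n) (Fin n) ℂ)
    (X : Matrix (Fin n) (Fin p) ℂ) (S : Matrix (Fin p) (Fin p) ℂ)
    (hpair : ∑ i ∈ Finset.range (m + 1), M i * X * S ^ i = 0)
    (hX : Xᴴ * X = 1)
    (v₁ : Fin n → ℂ) (lam₁ : ℂ)
    (hEig : (∑ i ∈ Finset.range (m + 1), lam₁ ^ i • M i) *ᵥ v₁ = 0)
    (hS : IsUnit (lam₁ • (1 : Matrix (Fin p) (Fin p) ℂ) - S).det)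
    (v : Fin n → ℂ) (hv : v = v₁ - X *ᵥ (Xᴴ *ᵥ v₁))
    (u : Fin p → ℂ)
    (hu : u = (lam₁ • (1 : Matrix (Fin p) (Fin p) ℂ) - S) *ᵥ (Xᴴ *ᵥ v₁)) :
    (∑ i ∈ Finset.range (m + 1), lam₁ ^ i • M i) *ᵥ v +
      ((∑ i ∈ Finset.range (m + 1), lam₁ ^ i • M i) * X *
        (lam₁ • (1 : Matrix (Fin p) (Fin p) ℂ) - S)⁻¹) *ᵥ u = 0 ∧
      Xᴴ *ᵥ v = 0 := by
  set A := ∑ i ∈ Finset.range (m + 1), lam₁ ^ i • M i with hA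
  set T := lam₁ • (1 : Matrix (Fin p) (Fin p) ℂ) - S with hT
  have hinv : T⁻¹ * T = 1 := nonsing_inv_mul T hS
  constructor
  · have h1 : (A * X * T⁻¹) *ᵥ u = (A * X) *ᵥ (Xᴴ *ᵥ v₁) := by
      rw [hu, mulVec_mulVec, Matrix.mul_assoc (A * X), hinv, Matrix.mul_one]
    rw [h1, hv, mulVec_sub, mulVec_mulVec, mulVec_mulVec, sub_add_cancel, hEig]
  · rw [hv, mulVec_sub, mulVec_mulVec, mulVec_mulVec, hX, Matrix.one_mul, sub_self]
end

section
/- Jacobian singularity — sufficiency of a Jordan chain: under the assumptions of the setting below, if there exists v₂ ∈ ℂⁿ with M(λ₁)v₂ + M'(λ₁)v₁ = 0, then the (n+p+1)×(n+p+1) matrix J = [[M(λ₁), U(λ₁), M'(λ₁)v + U'(λ₁)u],[Xᴴ, 0, 0],[cᴴ, 0, 0]] is singular, where v = (I−XXᴴ)v₁ and u = (λ₁I−S)Xᴴv₁. -/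
open Matrix

/-- Jacobian singularity — sufficiency: a Jordan chain of length two at
`(lam₁, v₁)` makes the Jacobian of the deflated extended system singular. -/
theorem jacobian_singular_of_jordan_chain (n p : ℕ)
    (M M' : ℂ → Matrix (Fin n) (Fin n) ℂ)
    (X : Matrix (Fin n) (Fin p) ℂ) (S : Matrix (Fin p) (Fin p) ℂ)
    (hX : Xᴴ * X = 1)
    (lam₁ : ℂ)
    (hM' : ∀ i j, HasDerivAt (fun lam => M lam i j) (M' lam₁ i j) lam₁)
    (hS : IsUnit (lam₁ • (1 : Matrix (Fin p) (Fin p) ℂ) - S).det)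
    (v₁ : Fin n → ℂ) (hv₁ : M lam₁ *ᵥ v₁ = 0)
    (c : Fin n → ℂ)
    (hBord : IsUnit ((fromRows Xᴴ (Matrix.replicateRow (Fin 1) (star c)) *
      fromCols X (Matrix.replicateCol (Fin 1) v₁)).det))
    (U U' : Matrix (Fin n) (Fin p) ℂ)
    (hU : U = M lam₁ * X * (lam₁ • (1 : Matrix (Fin p) (Fin p) ℂ) - S)⁻¹)
    (hU' : U' = -(M lam₁ * X * ((lam₁ • (1 : Matrix (Fin p) (Fin p) ℂ) - S)⁻¹ ^ 2))
      + M' lam₁ * X * (lam₁ • (1 : Matrix (Fin p) (Fin p) ℂ) - S)⁻¹)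
    (v : Fin n → ℂ) (hv : v = v₁ - X *ᵥ (Xᴴ *ᵥ v₁))
    (u : Fin p → ℂ)
    (hu : u = (lam₁ • (1 : Matrix (Fin p) (Fin p) ℂ) - S) *ᵥ (Xᴴ *ᵥ v₁))
    (J : Matrix (Fin n ⊕ (Fin p ⊕ Fin 1)) (Fin n ⊕ (Fin p ⊕ Fin 1)) ℂ)
    (hJ : J = fromBlocks (M lam₁)
      (fromCols U (Matrix.replicateCol (Fin 1) (M' lam₁ *ᵥ v + U' *ᵥ u)))
      (fromRows Xᴴ (Matrix.replicateRow (Fin 1) (star c))) 0)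
    (v₂ : Fin n → ℂ) (hchain : M lam₁ *ᵥ v₂ + M' lam₁ *ᵥ v₁ = 0) :
    ¬ IsUnit J.det := by
  set A := lam₁ • (1 : Matrix (Fin p) (Fin p) ℂ) - S with hA
  have hAinv : A⁻¹ * A = 1 := nonsing_inv_mul A hS
  have hUA : U * A = M lam₁ * X := by
    rw [hU, Matrix.mul_assoc, hAinv, Matrix.mul_one]
  have h2 : (A⁻¹) ^ 2 * A = A⁻¹ := by
    rw [sq, Matrix.mul_assoc, hAinv, Matrix.mul_one]
  have hU'A : U' * A = M' lam₁ * X - U := by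
    rw [hU', Matrix.add_mul, Matrix.neg_mul, Matrix.mul_assoc (M lam₁ * X), h2,
      Matrix.mul_assoc (M' lam₁ * X), hAinv, Matrix.mul_one, ← hU]
    abel
  set q := Xᴴ *ᵥ v₁ with hq
  -- the (p+1)-vector solving the bordered system
  set F := fromRows Xᴴ (Matrix.replicateRow (Fin 1) (star c)) with hF
  set G := fromCols X (Matrix.replicateCol (Fin 1) v₁) with hG
  set z := (F * G)⁻¹ *ᵥ (F *ᵥ v₂) with hz
  set t := z ∘ Sum.inl with ht
  set β := z (Sum.inr 0) with hβ
  set wn := X *ᵥ t + β • v₁ - v₂ with hwn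
  set wp := -(A *ᵥ t) - q with hwp
  have hGz : G *ᵥ z = X *ᵥ t + β • v₁ := by
    ext i
    rw [hG]
    simp [fromCols, mulVec, dotProduct, Fintype.sum_sum_type, Fin.sum_univ_one,
      ht, hβ, mul_comm]
  have hFwn : F *ᵥ wn = 0 := by
    rw [hwn, ← hGz, Matrix.mulVec_sub, Matrix.mulVec_mulVec, hz, Matrix.mulVec_mulVec,
      Matrix.mul_nonsing_inv _ hBord, Matrix.one_mulVec, sub_self]
  have hMv₂ : M lam₁ *ᵥ v₂ = -(M' lam₁ *ᵥ v₁) := eq_neg_of_add_eq_zero_left hchain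
  have hg : M' lam₁ *ᵥ v + U' *ᵥ u = M' lam₁ *ᵥ v₁ - U *ᵥ q := by
    have h1' : U' *ᵥ u = (M' lam₁ * X) *ᵥ q - U *ᵥ q := by
      rw [hu, Matrix.mulVec_mulVec, hU'A, Matrix.sub_mulVec]
    have h2' : M' lam₁ *ᵥ v = M' lam₁ *ᵥ v₁ - (M' lam₁ * X) *ᵥ q := by
      rw [hv, Matrix.mulVec_sub, Matrix.mulVec_mulVec]
    rw [h1', h2']
    abel
  have hMwn : M lam₁ *ᵥ wn = (M lam₁ * X) *ᵥ t + M' lam₁ *ᵥ v₁ := by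
    rw [hwn, Matrix.mulVec_sub, Matrix.mulVec_add, Matrix.mulVec_smul, hv₁,
      Matrix.mulVec_mulVec, hMv₂, smul_zero, add_zero, sub_neg_eq_add]
  have hUwp : U *ᵥ wp = -((M lam₁ * X) *ᵥ t) - U *ᵥ q := by
    rw [hwp, Matrix.mulVec_sub, Matrix.mulVec_neg, Matrix.mulVec_mulVec, hUA]
  -- the kernel vector
  set w : Fin n ⊕ (Fin p ⊕ Fin 1) → ℂ :=
    Sum.elim wn (Sum.elim wp fun _ => (-1 : ℂ)) with hw
  have hwne : w ≠ 0 := by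
    intro h
    have : w (Sum.inr (Sum.inr 0)) = 0 := by rw [h]; rfl
    simp [hw] at this
  have hcolg : Matrix.replicateCol (Fin 1) (M' lam₁ *ᵥ v + U' *ᵥ u) *ᵥ (fun _ => (-1 : ℂ))
      = -(M' lam₁ *ᵥ v + U' *ᵥ u) := by
    ext i
    simp [Matrix.replicateCol, mulVec, dotProduct]
  have hJw : J *ᵥ w = 0 := by
    rw [hJ, hw, Matrix.fromBlocks_mulVec]
    have e1 : (Sum.elim wn (Sum.elim wp fun _ : Fin 1 => (-1 : ℂ))) ∘ Sum.inl = wn := rfl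
    have e2 : (Sum.elim wn (Sum.elim wp fun _ : Fin 1 => (-1 : ℂ))) ∘ Sum.inr
        = Sum.elim wp (fun _ : Fin 1 => (-1 : ℂ)) := rfl
    rw [e1, e2, Matrix.fromCols_mulVec_sumElim, hcolg, hg, hMwn, hUwp, hFwn,
      Matrix.zero_mulVec, add_zero]
    have key : (M lam₁ * X) *ᵥ t + M' lam₁ *ᵥ v₁ +
        (-((M lam₁ * X) *ᵥ t) - U *ᵥ q + -(M' lam₁ *ᵥ v₁ - U *ᵥ q)) = 0 := by
      abel
    rw [key]
    ext (i | j) <;> rfl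
  have hdet : J.det = 0 := Matrix.exists_mulVec_eq_zero_iff.mp ⟨w, hwne, hJw⟩
  intro h
  rw [hdet] at h
  exact not_isUnit_zero h
end

section
/- Jacobian singularity — necessity: under the same setting, if the Jacobian J = [[M(λ₁), U(λ₁), M'(λ₁)v + U'(λ₁)u],[Xᴴ,0,0],[cᴴ,0,0]] is singular and, in addition, the null space of M(λ₁) is one-dimensional spanned by v₁ and [Xᴴ;cᴴ][X, v₁] is invertible, then there exists v₂ with M(λ₁)v₂ + M'(λ₁)v₁ = 0 (i.e. M'(λ₁)v₁ lies in the range of M(λ₁)). -/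
open Matrix

/-- Jacobian singularity — necessity: if the Jacobian of the deflated extended
system is singular, the kernel of `M(λ₁)` is spanned by `v₁`, and the bordered
matrix `[Xᴴ;cᴴ][X, v₁]` is invertible, then there is a Jordan chain of length
two, i.e. `M'(λ₁)v₁` lies in the range of `M(λ₁)`. -/
theorem jordan_chain_of_jacobian_singular (n p : ℕ)
    (M M' : ℂ → Matrix (Fin n) (Fin n) ℂ)
    (X : Matrix (Fin n) (Fin p) ℂ) (S : Matrix (Fin p) (Fin p) ℂ)
    (hX : Xᴴ * X = 1)
    (lam₁ : ℂ)
    (hM' : ∀ i j, HasDerivAt (fun lam => M lam i j) (M' lam₁ i j) lam₁)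
    (hS : IsUnit (lam₁ • (1 : Matrix (Fin p) (Fin p) ℂ) - S).det)
    (v₁ : Fin n → ℂ) (hv₁ : M lam₁ *ᵥ v₁ = 0) (hv₁ne : v₁ ≠ 0)
    (hker : ∀ w : Fin n → ℂ, M lam₁ *ᵥ w = 0 → ∃ α : ℂ, w = α • v₁)
    (c : Fin n → ℂ)
    (hBord : IsUnit ((fromRows Xᴴ (Matrix.replicateRow (Fin 1) (star c)) *
      fromCols X (Matrix.replicateCol (Fin 1) v₁)).det))
    (U U' : Matrix (Fin n) (Fin p) ℂ)
    (hU : U = M lam₁ * X * (lam₁ • (1 : Matrix (Fin p) (Fin p) ℂ) - S)⁻¹)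
    (hU' : U' = -(M lam₁ * X * ((lam₁ • (1 : Matrix (Fin p) (Fin p) ℂ) - S)⁻¹ ^ 2))
      + M' lam₁ * X * (lam₁ • (1 : Matrix (Fin p) (Fin p) ℂ) - S)⁻¹)
    (v : Fin n → ℂ) (hv : v = v₁ - X *ᵥ (Xᴴ *ᵥ v₁))
    (u : Fin p → ℂ)
    (hu : u = (lam₁ • (1 : Matrix (Fin p) (Fin p) ℂ) - S) *ᵥ (Xᴴ *ᵥ v₁))
    (J : Matrix (Fin n ⊕ (Fin p ⊕ Fin 1)) (Fin n ⊕ (Fin p ⊕ Fin 1)) ℂ)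
    (hJ : J = fromBlocks (M lam₁)
      (fromCols U (Matrix.replicateCol (Fin 1) (M' lam₁ *ᵥ v + U' *ᵥ u)))
      (fromRows Xᴴ (Matrix.replicateRow (Fin 1) (star c))) 0)
    (hsing : ¬ IsUnit J.det) :
    ∃ v₂ : Fin n → ℂ, M lam₁ *ᵥ v₂ + M' lam₁ *ᵥ v₁ = 0 := by
  classical
  set T : Matrix (Fin p) (Fin p) ℂ := lam₁ • (1 : Matrix (Fin p) (Fin p) ℂ) - S with hTdef
  have hT1 : T⁻¹ * T = 1 := Matrix.nonsing_inv_mul T hS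
  have hT2 : T * T⁻¹ = 1 := Matrix.mul_nonsing_inv T hS
  set s : Fin p → ℂ := Xᴴ *ᵥ v₁ with hsdef
  -- simplify the last column of the Jacobian
  have hUT : U' * T = -(M lam₁ * X * T⁻¹) + M' lam₁ * X := by
    have h2 : T⁻¹ ^ 2 * T = T⁻¹ := by rw [pow_two, Matrix.mul_assoc, hT1, Matrix.mul_one]
    rw [hU', Matrix.add_mul, Matrix.neg_mul, Matrix.mul_assoc (M lam₁ * X), h2,
      Matrix.mul_assoc (M' lam₁ * X), hT1, Matrix.mul_one]
  have hw : M' lam₁ *ᵥ v + U' *ᵥ u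
      = M' lam₁ *ᵥ v₁ - (M lam₁ * X * T⁻¹) *ᵥ s := by
    have hUu : U' *ᵥ u = (-(M lam₁ * X * T⁻¹) + M' lam₁ * X) *ᵥ s := by
      rw [hu, Matrix.mulVec_mulVec, hUT]
    have hMv : M' lam₁ *ᵥ v = M' lam₁ *ᵥ v₁ - (M' lam₁ * X) *ᵥ s := by
      rw [hv, Matrix.mulVec_sub, Matrix.mulVec_mulVec s (M' lam₁) X]
    rw [hUu, hMv, Matrix.add_mulVec, Matrix.neg_mulVec]
    abel
  -- extract a kernel vector of J
  have hdet : J.det = 0 := by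
    by_contra hne
    exact hsing (isUnit_iff_ne_zero.mpr hne)
  obtain ⟨z, hzne, hz⟩ := Matrix.exists_mulVec_eq_zero_iff.mpr hdet
  set x : Fin n → ℂ := fun i => z (Sum.inl i) with hxdef
  set yp : Fin p → ℂ := fun i => z (Sum.inr (Sum.inl i)) with hypdef
  set β : ℂ := z (Sum.inr (Sum.inr 0)) with hβdef
  have hzdec : z = Sum.elim x (Sum.elim yp (fun _ => β)) := by
    funext i
    rcases i with i | i | i
    · rfl
    · rfl
    · have : i = 0 := Subsingleton.elim i 0
      rw [this]
      rfl
  rw [hzdec, hJ, Matrix.fromBlocks_mulVec] at hz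
  have hcol : ∀ (w : Fin n → ℂ) (a : ℂ),
      Matrix.replicateCol (Fin 1) w *ᵥ (fun _ => a) = a • w := by
    intro w a
    funext i
    simp [Matrix.mulVec, Matrix.replicateCol, dotProduct, Fin.sum_univ_one, mul_comm]
  have hz1 : M lam₁ *ᵥ x +
      fromCols U (Matrix.replicateCol (Fin 1) (M' lam₁ *ᵥ v + U' *ᵥ u)) *ᵥ
        Sum.elim yp (fun _ => β) = 0 := by
    funext i; exact congrFun hz (Sum.inl i)
  have hz2 : fromRows Xᴴ (Matrix.replicateRow (Fin 1) (star c)) *ᵥ x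
      + (0 : Matrix (Fin p ⊕ Fin 1) (Fin p ⊕ Fin 1) ℂ) *ᵥ Sum.elim yp (fun _ => β) = 0 := by
    funext i; exact congrFun hz (Sum.inr i)
  rw [Matrix.zero_mulVec, add_zero, Matrix.fromRows_mulVec] at hz2
  have hXx : Xᴴ *ᵥ x = 0 := by
    funext i; exact congrFun hz2 (Sum.inl i)
  have hcx : Matrix.replicateRow (Fin 1) (star c) *ᵥ x = 0 := by
    funext i; exact congrFun hz2 (Sum.inr i)
  rw [Matrix.fromCols_mulVec_sumElim, hcol, hw, hU] at hz1
  -- hz1 : M x + ((M X T⁻¹) yp + β • (M' v₁ - (M X T⁻¹) s)) = 0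
  have e1 : ∀ r : Fin p → ℂ,
      M lam₁ *ᵥ (X *ᵥ (T⁻¹ *ᵥ r)) = (M lam₁ * X * T⁻¹) *ᵥ r := by
    intro r
    rw [Matrix.mulVec_mulVec, Matrix.mulVec_mulVec]
  by_cases hβ : β = 0
  · -- contradiction: the kernel vector of J must be zero
    exfalso
    rw [hβ, zero_smul, add_zero] at hz1
    set t : Fin p → ℂ := T⁻¹ *ᵥ yp with htdef
    have hMz : M lam₁ *ᵥ (x + X *ᵥ t) = 0 := by
      rw [Matrix.mulVec_add, e1]
      exact hz1
    obtain ⟨α, hα⟩ := hker _ hMz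
    have hxeq : x = α • v₁ - X *ᵥ t := by
      rw [← hα]; abel
    set B := fromRows Xᴴ (Matrix.replicateRow (Fin 1) (star c)) * fromCols X (Matrix.replicateCol (Fin 1) v₁)
      with hBdef
    set q : Fin p ⊕ Fin 1 → ℂ := Sum.elim (-t) (fun _ => α) with hqdef
    have hBq : B *ᵥ q = 0 := by
      rw [hBdef, ← Matrix.mulVec_mulVec, hqdef, Matrix.fromCols_mulVec_sumElim, hcol,
        Matrix.mulVec_neg]
      have : α • v₁ + -(X *ᵥ t) = x := by rw [hxeq]; abel
      rw [add_comm, this, Matrix.fromRows_mulVec, hXx, hcx]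
      funext i; rcases i with i | i <;> rfl
    have hq0 : q = 0 := by
      have h := congrArg (fun w => B⁻¹ *ᵥ w) hBq
      simpa [Matrix.mulVec_mulVec, Matrix.nonsing_inv_mul _ hBord] using h
    have ht0 : t = 0 := by
      funext i
      have := congrFun hq0 (Sum.inl i)
      simpa [hqdef, neg_eq_zero] using this
    have hα0 : α = 0 := congrFun hq0 (Sum.inr 0)
    have hyp0 : yp = 0 := by
      have : T *ᵥ t = yp := by
        rw [htdef, Matrix.mulVec_mulVec, hT2, Matrix.one_mulVec]
      rw [← this, ht0, Matrix.mulVec_zero]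
    have hx0 : x = 0 := by
      rw [hxeq, hα0, zero_smul, ht0, Matrix.mulVec_zero, sub_zero]
    apply hzne
    rw [hzdec, hx0, hyp0]
    have hβ0 : β = 0 := hβ
    funext i
    rcases i with i | i | i
    · rfl
    · rfl
    · simp [hβ0]
  · -- the generic case: build the Jordan chain vector
    refine ⟨β⁻¹ • (x + X *ᵥ (T⁻¹ *ᵥ yp)) - X *ᵥ (T⁻¹ *ᵥ s), ?_⟩
    rw [Matrix.mulVec_sub, Matrix.mulVec_smul, Matrix.mulVec_add, e1, e1]
    funext i
    have h := congrFun hz1 i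
    simp only [Pi.add_apply, Pi.sub_apply, Pi.smul_apply, Pi.neg_apply, Pi.zero_apply,
      smul_eq_mul] at h ⊢
    have key : (M lam₁ *ᵥ x) i + ((M lam₁ * X * T⁻¹) *ᵥ yp) i
        = β * (((M lam₁ * X * T⁻¹) *ᵥ s) i - (M' lam₁ *ᵥ v₁) i) := by
      linear_combination h
    rw [key, ← mul_assoc, inv_mul_cancel₀ hβ, one_mul]
    ring
end

section
/- If a singular vector (z₁, z₂, z₃) of the Jacobian J above has z₃ = 0, then under the assumptions that ker M(λ₁) = span{v₁} and [Xᴴ;cᴴ][X, v₁] is invertible, necessarily z₁ = 0 and z₂ = 0. Hence every nontrivial null vector of J has nonzero last component. -/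
open Matrix

/-- Any null vector `(z₁, z₂, z₃)` of the structured Jacobian with `z₃ = 0` is
trivial; hence every nontrivial null vector has nonzero last component. -/
theorem null_vector_with_zero_last_component_is_trivial (n p : ℕ)
    (M₁ : Matrix (Fin n) (Fin n) ℂ)
    (X : Matrix (Fin n) (Fin p) ℂ) (S : Matrix (Fin p) (Fin p) ℂ)
    (hX : Xᴴ * X = 1)
    (lam₁ : ℂ) (hS : IsUnit ((lam₁ • (1 : Matrix (Fin p) (Fin p) ℂ) - S).det))
    (U : Matrix (Fin n) (Fin p) ℂ)
    (hU : U = M₁ * X * (lam₁ • (1 : Matrix (Fin p) (Fin p) ℂ) - S)⁻¹)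
    (f : Fin n → ℂ)
    (v₁ : Fin n → ℂ) (hv₁ : M₁ *ᵥ v₁ = 0) (hv₁ne : v₁ ≠ 0)
    (hker : ∀ w : Fin n → ℂ, M₁ *ᵥ w = 0 → ∃ α : ℂ, w = α • v₁)
    (c : Fin n → ℂ)
    (hBord : IsUnit ((fromRows Xᴴ (Matrix.replicateRow (Fin 1) (star c)) *
      fromCols X (Matrix.replicateCol (Fin 1) v₁)).det))
    (z₁ : Fin n → ℂ) (z₂ : Fin p → ℂ) (z₃ : ℂ) (hz₃ : z₃ = 0)
    (hrow1 : M₁ *ᵥ z₁ + U *ᵥ z₂ + z₃ • f = 0)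
    (hrow2 : Xᴴ *ᵥ z₁ = 0)
    (hrow3 : star c ⬝ᵥ z₁ = 0) :
    z₁ = 0 ∧ z₂ = 0 := by
  subst hz₃ hU
  set A : Matrix (Fin p) (Fin p) ℂ := lam₁ • (1 : Matrix (Fin p) (Fin p) ℂ) - S with hA
  set w : Fin p → ℂ := A⁻¹ *ᵥ z₂ with hw
  -- M₁ (z₁ + X w) = 0
  have hk : M₁ *ᵥ (z₁ + X *ᵥ w) = 0 := by
    have : (M₁ * X * A⁻¹) *ᵥ z₂ = M₁ *ᵥ (X *ᵥ w) := by
      rw [hw, ← mulVec_mulVec, ← mulVec_mulVec]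
    simpa [mulVec_add, this] using hrow1
  obtain ⟨α, hα⟩ := hker _ hk
  -- w = α • (Xᴴ *ᵥ v₁)
  have hw₁ : w = α • (Xᴴ *ᵥ v₁) := by
    have := congrArg (fun y => Xᴴ *ᵥ y) hα
    simpa [mulVec_add, mulVec_mulVec, hX, hrow2, mulVec_smul] using this
  -- build null vector of bordered matrix
  set u : Fin p ⊕ Fin 1 → ℂ := Sum.elim w (fun _ => -α) with hu
  set B : Matrix (Fin p ⊕ Fin 1) (Fin p ⊕ Fin 1) ℂ :=
    fromRows Xᴴ (Matrix.replicateRow (Fin 1) (star c)) * fromCols X (Matrix.replicateCol (Fin 1) v₁) with hB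
  have hCu : fromCols X (Matrix.replicateCol (Fin 1) v₁) *ᵥ u = -z₁ := by
    have hcol : Matrix.replicateCol (Fin 1) v₁ *ᵥ (fun _ : Fin 1 => -α) = (-α) • v₁ := by
      ext i
      simp [Matrix.replicateCol, mulVec, dotProduct, mul_comm]
    have hz : z₁ = α • v₁ - X *ᵥ w := eq_sub_of_add_eq hα
    have : X *ᵥ w + (-α) • v₁ = -z₁ := by rw [hz]; module
    simpa [hu, hcol] using this
  have hr : Matrix.replicateRow (Fin 1) (star c) *ᵥ z₁ = 0 := by
    ext i
    simpa [Matrix.replicateRow, mulVec, dotProduct] using hrow3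
  have hBu : B *ᵥ u = 0 := by
    rw [hB, ← mulVec_mulVec, hCu, mulVec_neg, fromRows_mulVec, hrow2, hr]
    ext (i | i) <;> simp
  have hu0 : u = 0 := by
    have h := congrArg (fun y => B⁻¹ *ᵥ y) hBu
    simp only [mulVec_mulVec, Matrix.nonsing_inv_mul _ hBord, one_mulVec, mulVec_zero] at h
    exact h
  have hw0 : w = 0 := by
    ext i; exact congrFun hu0 (Sum.inl i)
  have hα0 : α = 0 := by
    have := congrFun hu0 (Sum.inr 0)
    simpa [hu] using this
  constructor
  · rw [hα0, zero_smul] at hα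
    have : X *ᵥ w = 0 := by rw [hw0, mulVec_zero]
    rw [this] at hα
    simpa using hα
  · have : A *ᵥ w = z₂ := by
      rw [hw, mulVec_mulVec, Matrix.mul_nonsing_inv _ hS, one_mulVec]
    rw [hw0, mulVec_zero] at this
    exact this.symm
end

section
/- Block upper-triangular extension of an invariant pair: if (X,S) satisfies Σᵢ Mᵢ X Sⁱ = 0 and (v, u, λ) satisfies Σᵢ Mᵢ (X qᵢ(S,u,λ) + v λⁱ) = 0 where the extended pair is X̂ = [X, v], Ŝ = [[S, u],[0, λ]], then (X̂, Ŝ) satisfies Σᵢ Mᵢ X̂ Ŝⁱ = 0, where the top-right block of Ŝⁱ is qᵢ(S,u,λ) := Σ_{j=0}^{i−1} S^j u λ^{i−1−j}. -/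
open Matrix

/-- Block upper-triangular extension of an invariant pair of a polynomial NEP:
if `(X,S)` is an invariant pair and `(v,u,λ)` satisfies the extension equation,
then `(X̂, Ŝ)` with `X̂ = [X, v]`, `Ŝ = [[S, u],[0, λ]]` is an invariant pair. -/
theorem invariant_pair_extension (n p m : ℕ)
    (M : ℕ → Matrix (Fin n) (Fin n) ℂ)
    (X : Matrix (Fin n) (Fin p) ℂ) (S : Matrix (Fin p) (Fin p) ℂ)
    (v : Fin n → ℂ) (u : Fin p → ℂ) (lam : ℂ)
    (hpair : ∑ i ∈ Finset.range (m + 1), M i * X * S ^ i = 0)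
    (q : ℕ → Fin p → ℂ)
    (hq : ∀ i, q i = ∑ j ∈ Finset.range i, lam ^ (i - 1 - j) • (S ^ j *ᵥ u))
    (hext : ∑ i ∈ Finset.range (m + 1), M i *ᵥ (X *ᵥ q i + lam ^ i • v) = 0)
    (Xhat : Matrix (Fin n) (Fin p ⊕ Fin 1) ℂ)
    (hX : Xhat = fromCols X (Matrix.replicateCol (Fin 1) v))
    (Shat : Matrix (Fin p ⊕ Fin 1) (Fin p ⊕ Fin 1) ℂ)
    (hS : Shat = fromBlocks S (Matrix.replicateCol (Fin 1) u) 0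
      (lam • (1 : Matrix (Fin 1) (Fin 1) ℂ))) :
    ∑ i ∈ Finset.range (m + 1), M i * Xhat * Shat ^ i = 0 := by
  -- recurrence for q
  have hqrec : ∀ i, q (i + 1) = S ^ i *ᵥ u + lam • q i := by
    intro i
    rw [hq, hq, Finset.sum_range_succ]
    simp only [Nat.add_sub_cancel, Nat.sub_self, pow_zero, one_smul]
    rw [add_comm]
    congr 1
    rw [Finset.smul_sum]
    refine Finset.sum_congr rfl fun j hj => ?_
    have hj' : j < i := Finset.mem_range.mp hj
    rw [smul_smul, ← pow_succ']
    congr 2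
    omega
  -- powers of Shat
  have hpow : ∀ i, Shat ^ i = fromBlocks (S ^ i) (Matrix.replicateCol (Fin 1) (q i)) 0
      (lam ^ i • (1 : Matrix (Fin 1) (Fin 1) ℂ)) := by
    intro i
    induction i with
    | zero =>
      simp [hq 0, ← fromBlocks_one]
    | succ i ih =>
      rw [pow_succ, ih, hS, fromBlocks_multiply]
      have h11 : S ^ i * S + Matrix.replicateCol (Fin 1) (q i) * (0 : Matrix (Fin 1) (Fin p) ℂ)
          = S ^ (i + 1) := by
        simp [pow_succ, Matrix.mul_zero]
      have h12 : S ^ i * Matrix.replicateCol (Fin 1) u +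
          Matrix.replicateCol (Fin 1) (q i) * (lam • (1 : Matrix (Fin 1) (Fin 1) ℂ)) =
          Matrix.replicateCol (Fin 1) (q (i + 1))  := by
        rw [hqrec i, replicateCol_add, replicateCol_mulVec, replicateCol_smul, Matrix.mul_smul, Matrix.mul_one]
      have h21 : (0 : Matrix (Fin 1) (Fin p) ℂ) * S +
          (lam ^ i • (1 : Matrix (Fin 1) (Fin 1) ℂ)) * (0 : Matrix (Fin 1) (Fin p) ℂ)
          = 0 := by simp
      have h22 : (0 : Matrix (Fin 1) (Fin p) ℂ) * Matrix.replicateCol (Fin 1) u +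
          (lam ^ i • (1 : Matrix (Fin 1) (Fin 1) ℂ)) * (lam • 1) =
          lam ^ (i + 1) • (1 : Matrix (Fin 1) (Fin 1) ℂ) := by
        simp [smul_smul, pow_succ, mul_comm]
      rw [h11, h12, h21, h22]
  have key : ∀ i, M i * Xhat * Shat ^ i =
      fromCols (M i * X * S ^ i)
        (Matrix.replicateCol (Fin 1) (M i *ᵥ (X *ᵥ q i + lam ^ i • v))) := by
    intro i
    have hc : Matrix.replicateCol (Fin 1) (M i *ᵥ (X *ᵥ q i + lam ^ i • v)) =
        M i * (X * Matrix.replicateCol (Fin 1) (q i) +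
          Matrix.replicateCol (Fin 1) v * (lam ^ i • (1 : Matrix (Fin 1) (Fin 1) ℂ))) := by
      rw [replicateCol_mulVec, replicateCol_add, replicateCol_mulVec, replicateCol_smul, Matrix.mul_smul, Matrix.mul_one]
    rw [hpow, hX, Matrix.mul_assoc, fromCols_mul_fromBlocks, Matrix.mul_zero, add_zero,
      mul_fromCols, hc, ← Matrix.mul_assoc]
  calc ∑ i ∈ Finset.range (m + 1), M i * Xhat * Shat ^ i
      = fromCols (∑ i ∈ Finset.range (m + 1), M i * X * S ^ i)
        (Matrix.replicateCol (Fin 1) (∑ i ∈ Finset.range (m + 1),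
          M i *ᵥ (X *ᵥ q i + lam ^ i • v))) := by
        rw [Finset.sum_congr rfl fun i _ => key i]
        ext x (y | y) <;>
          simp [Matrix.sum_apply, fromCols_apply_inl, fromCols_apply_inr]
    _ = 0 := by
        rw [hpair, hext]
        ext x (y | y) <;>
          simp [fromCols_apply_inl, fromCols_apply_inr]
end
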